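/- Let 0 < t1 < 1/4 and let 0 < t0 < t_{0,crit}(t1). Then the set of positive real roots of the polynomial p is nonempty and has a least element r = r(t0,t1); moreover this smallest positive root is a simple root of p, i.e. p(r) = 0 and p'(r) ≠ 0. -/

import Mathlib

noncomputable section

/-- The degree-10 polynomial `p` of the paper, as a real function of `x`. -/
def p (t0 t1 x : ℝ) : ℝ :=
  128*x^10 - 124*x^8 + (64*t0 - 16*t1 + 36)*x^6
    + (16*t1^2 + 8*t1 - 28*t0 - 3)*x^4 + t0*(2 - 8*t1)*x^2 + t0^2

/-- The cubic polynomial `p1` whose greatest real root is `t_{0,crit}(t1)`. -/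
def p1 (t1 s : ℝ) : ℝ :=
  8192*s^3 + 192*(64*t1 - 7)*s^2 - 48*(1 - 4*t1)^2*s + (108*t1 - 11)*(4*t1 - 1)^3

/-- Injectivity of `m ↦ (1-2m)^2 (1+4m)` on `(0, 1/2)`. -/
private lemma inj_aux (r m : ℝ) (hr : 0 < r) (hrm : r ≤ m) (hm : m < 1/2)
    (h : (1-2*r)^2*(1+4*r) = (1-2*m)^2*(1+4*m)) : r = m := by
  by_contra hne
  have h1 : r < m := lt_of_le_of_ne hrm hne
  have hm0 : 0 < m := lt_trans hr h1
  have h12 : 0 < 1 - 2*m := by linarith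
  have hX : 0 < 3*(r+m) - 4*(r^2+r*m+m^2) := by
    linarith [mul_pos hr (sub_pos.2 h1), mul_pos hm0 h12, mul_pos hr h12]
  have hprod := mul_pos (sub_pos.2 h1) hX
  linarith [h, hprod]

/-- For `s` beyond the critical value `4m³-6m⁴`, the cubic `p1 t1` is positive. -/
private lemma p1_pos (t1 m s : ℝ) (hm0 : 0 < m) (hm2 : m < 1/2)
    (hrel : 16*m^3 - 12*m^2 + 1 - 4*t1 = 0) (hs : 4*m^3 - 6*m^4 < s) :
    0 < p1 t1 s := by
  have key : p1 t1 s = 8192*(s - (4*m^3-6*m^4)) *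
      ((s - (4*m^3-6*m^4))^2 + (27/128 - 9/2*m^2 + 18*m^3 - 18*m^4)*(s - (4*m^3-6*m^4))
        + 27/16*m^3*(1-2*m)^3*(1+4*m-8*m^2)) := by
    unfold p1
    linear_combination (11 + 132*m^2 - 176*m^3 + 1584*m^4 - 4224*m^5 + 49472*m^6
      - 186624*m^7 + 248832*m^8 - 110592*m^9
      + t1*(-196 - 1824*m^2 + 2432*m^3 - 15552*m^4 + 41472*m^5 - 27648*m^6)
      + t1^2*(1040 + 5184*m^2 - 6912*m^3) - 1728*t1^3
      + s*(-48 - 576*m^2 + 768*m^3 + 192*t1) - 3072*s^2) * hrel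
  have hd : 0 < s - (4*m^3-6*m^4) := by linarith
  have h12 : 0 < 1 - 2*m := by linarith
  have hq : 0 < 1 + 8*m - 16*m^2 := by linarith [mul_pos hm0 h12]
  have hg1 : 0 ≤ 27/128 - 9/2*m^2 + 18*m^3 - 18*m^4 := by
    linarith [mul_nonneg (sq_nonneg (1-4*m)) hq.le]
  have hg0 : 0 ≤ 27/16*m^3*(1-2*m)^3*(1+4*m-8*m^2) := by
    have h1 : 0 < 1+4*m-8*m^2 := by linarith [mul_pos hm0 h12]
    have := mul_pos (mul_pos (mul_pos (show (0:ℝ) < 27/16 by norm_num)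
      (pow_pos hm0 3)) (pow_pos h12 3)) h1
    linarith
  rw [key]
  linarith [pow_pos hd 3, mul_nonneg hg1 (sq_nonneg (s - (4*m^3-6*m^4))),
    mul_nonneg hg0 hd.le]

/-- Positivity of `(1-4x²)² - 4t1` for `0 ≤ x ≤ m`. -/
private lemma H_pos (t1 m x : ℝ) (hm0 : 0 < m) (hm2 : m < 1/2)
    (hrel : 16*m^3 - 12*m^2 + 1 - 4*t1 = 0) (hx : 0 ≤ x) (hxm : x ≤ m) :
    0 < (1-4*x^2)^2 - 4*t1 := by
  have h12 : 0 < 1 - 2*m := by linarith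
  have h1 : 0 ≤ 4*m^2 - 4*x^2 := by
    linarith [mul_nonneg (sub_nonneg.2 hxm) (by linarith : (0:ℝ) ≤ m + x)]
  have h2 : 0 ≤ 2 - 4*x^2 - 4*m^2 := by
    linarith [h1, mul_pos h12 (show (0:ℝ) < 1 + 2*m by linarith)]
  have h3 : 0 < (2*m - 4*m^2)^2 := pow_pos (by linarith [mul_pos hm0 h12]) 2
  linarith [mul_nonneg h1 h2, h3, hrel]

set_option maxHeartbeats 1000000 in
/-- For `(t0,t1)` in the phase-diagram region `F`, the polynomial `p` has a smallest
positive root `r = r(t0,t1)`, which is moreover a simple root of `p`. -/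
theorem smallest_positive_root_of_p_exists_and_simple
    (t0 t1 tc : ℝ) (ht1 : 0 < t1) (ht1' : t1 < 1/4)
    (htc : IsGreatest {s : ℝ | p1 t1 s = 0} tc)
    (ht0 : 0 < t0) (ht0' : t0 < tc) :
    ∃ r : ℝ, IsLeast {x : ℝ | 0 < x ∧ p t0 t1 x = 0} r ∧
      deriv (p t0 t1) r ≠ 0 := by
  -- Step 1: get the parameter m ∈ (0, 1/2) with 16m³-12m²+1-4t1 = 0
  have hcont : Continuous (fun x : ℝ => 16*x^3 - 12*x^2 + 1 - 4*t1) := by continuity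
  obtain ⟨m, hmIcc, hm⟩ : ∃ m ∈ Set.Icc (0:ℝ) (1/2),
      (fun x : ℝ => 16*x^3 - 12*x^2 + 1 - 4*t1) m = 0 := by
    have hsub := intermediate_value_Icc' (by norm_num : (0:ℝ) ≤ 1/2) hcont.continuousOn
    have h0 : (0:ℝ) ∈ Set.Icc ((fun x : ℝ => 16*x^3 - 12*x^2 + 1 - 4*t1) (1/2))
        ((fun x : ℝ => 16*x^3 - 12*x^2 + 1 - 4*t1) 0) := by
      simp only [Set.mem_Icc]
      norm_num
      constructor <;> linarith
    exact hsub h0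
  have hrel : 16*m^3 - 12*m^2 + 1 - 4*t1 = 0 := hm
  have hm0 : 0 < m := by
    rcases lt_or_eq_of_le hmIcc.1 with h | h
    · exact h
    · exfalso; rw [← h] at hrel; norm_num at hrel; linarith
  have hm2 : m < 1/2 := by
    rcases lt_or_eq_of_le hmIcc.2 with h | h
    · exact h
    · exfalso; rw [h] at hrel; norm_num at hrel; linarith
  have h12 : 0 < 1 - 2*m := by linarith
  -- Step 2: t0 < s1 := 4m³-6m⁴
  have hs1 : t0 < 4*m^3 - 6*m^4 := by
    by_contra hcon
    push_neg at hcon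
    have := p1_pos t1 m tc hm0 hm2 hrel (by linarith)
    have h0 : p1 t1 tc = 0 := htc.1
    linarith
  -- Step 3: the upper branch function φ
  set φ : ℝ → ℝ := fun x => -32*x^6 + 14*x^4 - (1-4*t1)*x^2
      + 2*x^2*(1-4*x^2)*Real.sqrt ((1-4*x^2)^2 - 4*t1) with hφdef
  have hφcont : Continuous φ := by
    apply Continuous.add
    · continuity
    · exact (by continuity : Continuous fun x : ℝ => 2*x^2*(1-4*x^2)).mul
        ((by continuity : Continuous fun x : ℝ => (1-4*x^2)^2 - 4*t1).sqrt)
  -- φ m = 4m³-6m⁴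
  have hHm : (1-4*m^2)^2 - 4*t1 = (2*m-4*m^2)^2 := by linear_combination hrel
  have hsqm : Real.sqrt ((1-4*m^2)^2 - 4*t1) = 2*m-4*m^2 := by
    rw [hHm]; exact Real.sqrt_sq (by linarith [mul_pos hm0 h12])
  have hφm : φ m = 4*m^3 - 6*m^4 := by
    simp only [hφdef, hsqm]
    linear_combination (-(m^2)) * hrel
  -- Step 4: r := sInf of the set where φ ≥ t0
  set S' : Set ℝ := Set.Icc 0 m ∩ {x | t0 ≤ φ x} with hS'def
  have hS'ne : S'.Nonempty := ⟨m, ⟨le_of_lt hm0, le_refl m⟩, by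
    simp only [Set.mem_setOf_eq, hφm]; linarith⟩
  have hS'bdd : BddBelow S' := ⟨0, fun x hx => hx.1.1⟩
  have hS'closed : IsClosed S' :=
    isClosed_Icc.inter (isClosed_le continuous_const hφcont)
  set r : ℝ := sInf S' with hrdef
  have hrS : r ∈ S' := hS'closed.csInf_mem hS'ne hS'bdd
  have hr0 : 0 ≤ r := hrS.1.1
  have hrm : r ≤ m := hrS.1.2
  have hφr : t0 ≤ φ r := hrS.2
  have hφ0 : φ 0 = 0 := by rw [hφdef]; norm_num
  have hrpos : 0 < r := by
    rcases lt_or_eq_of_le hr0 with h | h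
    · exact h
    · exfalso; rw [← h] at hφr; rw [hφ0] at hφr; linarith
  have hless : ∀ x, 0 ≤ x → x < r → φ x < t0 := by
    intro x hx hxr
    by_contra hcon
    push_neg at hcon
    have hxS : x ∈ S' := ⟨⟨hx, le_trans (le_of_lt hxr) hrm⟩, hcon⟩
    have h2 := csInf_le hS'bdd hxS
    rw [← hrdef] at h2
    linarith
  have hφr' : φ r ≤ t0 := by
    have htend : Filter.Tendsto φ (nhdsWithin r (Set.Iio r)) (nhds (φ r)) :=
      (hφcont.tendsto r).mono_left nhdsWithin_le_nhds
    have hev : ∀ᶠ x in nhdsWithin r (Set.Iio r), φ x ≤ t0 := by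
      filter_upwards [self_mem_nhdsWithin,
        (eventually_gt_nhds hrpos).filter_mono nhdsWithin_le_nhds] with x hx1 hx2
      exact (hless x hx2.le hx1).le
    exact le_of_tendsto htend hev
  have hφreq : φ r = t0 := le_antisymm hφr' hφr
  -- Step 5: basic facts at r
  have hrhalf : r < 1/2 := lt_of_le_of_lt hrm hm2
  have hHr : 0 < (1-4*r^2)^2 - 4*t1 := H_pos t1 m r hm0 hm2 hrel hr0 hrm
  set w : ℝ := Real.sqrt ((1-4*r^2)^2 - 4*t1) with hwdef
  have hw2 : w^2 = (1-4*r^2)^2 - 4*t1 := Real.sq_sqrt hHr.le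
  have hwpos : 0 < w := Real.sqrt_pos.mpr hHr
  have ht0w : t0 = -32*r^6 + 14*r^4 - (1-4*t1)*r^2 + 2*r^2*(1-4*r^2)*w := by
    rw [← hφreq]
  -- p r = 0
  have hpr : p t0 t1 r = 0 := by
    have hfac : p t0 t1 r =
        (t0 - (-32*r^6 + 14*r^4 - (1-4*t1)*r^2 + 2*r^2*(1-4*r^2)*w)) *
        (t0 - (-32*r^6 + 14*r^4 - (1-4*t1)*r^2 - 2*r^2*(1-4*r^2)*w)) := by
      unfold p
      linear_combination (2*r^2*(1-4*r^2))^2 * hw2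
    rw [hfac]
    have h0 : t0 - (-32*r^6 + 14*r^4 - (1-4*t1)*r^2 + 2*r^2*(1-4*r^2)*w) = 0 := by
      linarith [ht0w]
    rw [h0, zero_mul]
  -- lower bound : no smaller positive root
  have hlb : ∀ x : ℝ, 0 < x ∧ p t0 t1 x = 0 → r ≤ x := by
    rintro x ⟨hx0, hpx⟩
    by_contra hcon
    push_neg at hcon
    have hxm : x ≤ m := le_trans hcon.le hrm
    have hHx : 0 < (1-4*x^2)^2 - 4*t1 := H_pos t1 m x hm0 hm2 hrel hx0.le hxm
    set wx : ℝ := Real.sqrt ((1-4*x^2)^2 - 4*t1) with hwxdef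
    have hwx2 : wx^2 = (1-4*x^2)^2 - 4*t1 := Real.sq_sqrt hHx.le
    have hwxpos : 0 < wx := Real.sqrt_pos.mpr hHx
    have hfacx : p t0 t1 x =
        (t0 - (-32*x^6 + 14*x^4 - (1-4*t1)*x^2 + 2*x^2*(1-4*x^2)*wx)) *
        (t0 - (-32*x^6 + 14*x^4 - (1-4*t1)*x^2 - 2*x^2*(1-4*x^2)*wx)) := by
      unfold p
      linear_combination (2*x^2*(1-4*x^2))^2 * hwx2
    have hφx : φ x = -32*x^6 + 14*x^4 - (1-4*t1)*x^2 + 2*x^2*(1-4*x^2)*wx := rfl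
    have hxlt : φ x < t0 := hless x hx0.le hcon
    rw [hφx] at hxlt
    have hxhalf : x < 1/2 := lt_trans hcon hrhalf
    have h4 : 0 < 1-4*x^2 := by
      linarith [mul_pos (show (0:ℝ) < 1-2*x by linarith) (show (0:ℝ) < 1+2*x by linarith)]
    have hb : 0 ≤ 2*x^2*(1-4*x^2) :=
      mul_nonneg (by positivity : (0:ℝ) ≤ 2*x^2) h4.le
    have hpos1 : 0 < t0 - (-32*x^6 + 14*x^4 - (1-4*t1)*x^2 + 2*x^2*(1-4*x^2)*wx) := by
      linarith
    have hpos2 : 0 < t0 - (-32*x^6 + 14*x^4 - (1-4*t1)*x^2 - 2*x^2*(1-4*x^2)*wx) := by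
      linarith [mul_nonneg hb hwxpos.le]
    rw [hfacx] at hpx
    linarith [mul_pos hpos1 hpos2]
  -- Step 6: the derivative at r
  have hderiv : HasDerivAt (p t0 t1)
      (1280*r^9 - 992*r^7 + (64*t0-16*t1+36)*(6*r^5) + (16*t1^2+8*t1-28*t0-3)*(4*r^3)
        + t0*(2-8*t1)*(2*r)) r := by
    have h10 : HasDerivAt (fun x : ℝ => x^10) (10*r^9) r := by
      simpa using hasDerivAt_pow 10 r
    have h8 : HasDerivAt (fun x : ℝ => x^8) (8*r^7) r := by
      simpa using hasDerivAt_pow 8 r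
    have h6 : HasDerivAt (fun x : ℝ => x^6) (6*r^5) r := by
      simpa using hasDerivAt_pow 6 r
    have h4 : HasDerivAt (fun x : ℝ => x^4) (4*r^3) r := by
      simpa using hasDerivAt_pow 4 r
    have h2 : HasDerivAt (fun x : ℝ => x^2) (2*r) r := by
      simpa using hasDerivAt_pow 2 r
    have d1 := h10.const_mul (128:ℝ)
    have d2 := h8.const_mul (124:ℝ)
    have d3 := h6.const_mul (64*t0-16*t1+36)
    have d4 := h4.const_mul (16*t1^2+8*t1-28*t0-3)
    have d5 := h2.const_mul (t0*(2-8*t1))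
    have hsum := ((((d1.sub d2).add d3).add d4).add d5).add_const (t0^2)
    have heq : p t0 t1 = fun x : ℝ => 128*x^10 - 124*x^8 + (64*t0 - 16*t1 + 36)*x^6
        + (16*t1^2 + 8*t1 - 28*t0 - 3)*x^4 + t0*(2 - 8*t1)*x^2 + t0^2 := rfl
    rw [heq]
    refine (hsum.congr_deriv (by ring)).congr_of_eventuallyEq (Filter.Eventually.of_forall fun x => ?_)
    simp only [Pi.add_apply, Pi.sub_apply]
  refine ⟨r, ⟨⟨hrpos, hpr⟩, hlb⟩, ?_⟩
  intro hzero
  rw [hderiv.deriv] at hzero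
  -- factor the derivative
  have hfac2 : 1280*r^9 - 992*r^7 + (64*t0-16*t1+36)*(6*r^5) + (16*t1^2+8*t1-28*t0-3)*(4*r^3)
        + t0*(2-8*t1)*(2*r)
      = 8*r^3*(1-4*r^2) * ((w - 2*(1-4*r^2)) * (w^2 + 8*r^2*w - 4*r^2*(1-4*r^2))) := by
    linear_combination (384*r^5 - 112*r^3 + (2-8*t1)*(2*r)) * ht0w
      + (16*r^3 - 8*r^3*w - 192*r^5 + 32*r^5*w + 512*r^7) * hw2
  rw [hfac2] at hzero
  have hu : 0 < 1 - 4*r^2 := by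
    linarith [mul_pos (show (0:ℝ) < 1-2*r by linarith) (show (0:ℝ) < 1+2*r by linarith)]
  have hw_lt : w < 2*(1-4*r^2) := by
    have h1 : w^2 < (2*(1-4*r^2))^2 := by
      linarith [hw2, sq_nonneg (1-4*r^2), ht1]
    exact lt_of_pow_lt_pow_left₀ 2 (by linarith) h1
  have hQ : w^2 + 8*r^2*w - 4*r^2*(1-4*r^2) = 0 := by
    rcases mul_eq_zero.mp hzero with h | h
    · exfalso
      have := mul_pos (show (0:ℝ) < 8*r^3 by positivity) hu
      linarith
    · rcases mul_eq_zero.mp h with h' | h'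
      · exfalso; linarith
      · exact h'
  have hfac3 : (w + 4*r^2 - 2*r) * (w + 4*r^2 + 2*r) = 0 := by
    linear_combination hQ
  have hww : w = 2*r - 4*r^2 := by
    rcases mul_eq_zero.mp hfac3 with h | h
    · linarith
    · exfalso; linarith [sq_nonneg r]
  have hw2' : (2*r-4*r^2)^2 = (1-4*r^2)^2 - 4*t1 := by rw [← hww]; exact hw2
  have hcurve : (1-2*r)^2*(1+4*r) = (1-2*m)^2*(1+4*m) := by
    linear_combination (-1) * hw2' - hrel
  have hreq : r = m := inj_aux r m hrpos hrm hm2 hcurve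
  rw [hreq] at ht0w hww
  rw [hww] at ht0w
  have hfin : t0 = 4*m^3 - 6*m^4 := by linear_combination ht0w - m^2 * hrel
  linarith
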